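/- Let α > 1 and a_j = j^{−α} for j ≥ 1. Then there exist constants c, C > 0 such that for all β ≥ 1, c β^{−(α−1)/α} ≤ ∑_{j≥1} j^{−α}/(1 + β j^{−α}) ≤ C β^{−(α−1)/α}. -/

import Mathlib

open Real Finset

/-- Bernoulli-type inequality: for `1 ≤ a` and `1 < α`,
`(α-1) (a+1)^(-α) ≤ a^(1-α) - (a+1)^(1-α)`. -/
private lemma key_bernoulli {α : ℝ} (hα : 1 < α) {a : ℝ} (ha : 1 ≤ a) :
    (α - 1) * (a + 1) ^ (-α) ≤ a ^ (1 - α) - (a + 1) ^ (1 - α) := by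
  have ha0 : (0:ℝ) < a := lt_of_lt_of_le one_pos ha
  have hb0 : (0:ℝ) < a + 1 := by linarith
  have hA0 : (0:ℝ) < a ^ α := rpow_pos_of_pos ha0 _
  have hB0 : (0:ℝ) < (a + 1) ^ α := rpow_pos_of_pos hb0 _
  -- Bernoulli: (1 + 1/a)^α ≥ 1 + α/a
  have hber : 1 + α * (1 / a) ≤ (1 + 1 / a) ^ α := by
    apply one_add_mul_self_le_rpow_one_add _ hα.le
    have : (0:ℝ) < 1 / a := by positivity
    linarith
  have h1 : (1 : ℝ) + 1 / a = (a + 1) / a := by field_simp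
  rw [h1, Real.div_rpow hb0.le ha0.le] at hber
  -- hence (a + α) * a^α ≤ a * (a+1)^α
  have hAB : (a + α) * a ^ α ≤ a * (a + 1) ^ α := by
    have h2 := mul_le_mul_of_nonneg_left hber (le_of_lt (mul_pos hA0 ha0))
    have h3 : a ^ α * a * ((a + 1) ^ α / a ^ α) = a * (a + 1) ^ α := by
      field_simp
    have h4 : a ^ α * a * (1 + α * (1 / a)) = (a + α) * a ^ α := by
      field_simp
    rw [h3, h4] at h2
    exact h2
  -- rewrite the goal in terms of a^α and (a+1)^α
  have e1 : (a + 1) ^ (-α) = ((a + 1) ^ α)⁻¹ := by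
    rw [Real.rpow_neg hb0.le]
  have e2 : a ^ (1 - α) = a * (a ^ α)⁻¹ := by
    rw [sub_eq_add_neg, Real.rpow_add ha0, Real.rpow_one, Real.rpow_neg ha0.le]
  have e3 : (a + 1) ^ (1 - α) = (a + 1) * ((a + 1) ^ α)⁻¹ := by
    rw [sub_eq_add_neg, Real.rpow_add hb0, Real.rpow_one, Real.rpow_neg hb0.le]
  rw [e1, e2, e3]
  have h5 : (a + α) * ((a + 1) ^ α)⁻¹ ≤ a * (a ^ α)⁻¹ := by
    rw [← div_eq_mul_inv, ← div_eq_mul_inv, div_le_div_iff₀ hB0 hA0]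
    nlinarith [hAB]
  have h6 : (α - 1) * ((a + 1) ^ α)⁻¹ + (a + 1) * ((a + 1) ^ α)⁻¹
      = (a + α) * ((a + 1) ^ α)⁻¹ := by ring
  linarith

/-- Telescoping tail bound: `∑_{n < M} (n+N+1)^(-α) ≤ N^(1-α)/(α-1)`. -/
private lemma tail_sum_le {α : ℝ} (hα : 1 < α) {N : ℕ} (hN : 1 ≤ N) (M : ℕ) :
    ∑ n ∈ range M, ((n : ℝ) + N + 1) ^ (-α) ≤ (N : ℝ) ^ (1 - α) / (α - 1) := by
  have hα1 : (0:ℝ) < α - 1 := by linarith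
  have step : ∀ n ∈ range M,
      ((n : ℝ) + N + 1) ^ (-α)
        ≤ (((n : ℝ) + N) ^ (1 - α) - ((n : ℝ) + N + 1) ^ (1 - α)) / (α - 1) := by
    intro n _
    have ha : (1:ℝ) ≤ (n : ℝ) + N := by
      have : (1:ℝ) ≤ (N:ℝ) := by exact_mod_cast hN
      have : (0:ℝ) ≤ (n:ℝ) := Nat.cast_nonneg n
      linarith [ (show (1:ℝ) ≤ (N:ℝ) by exact_mod_cast hN) ]
    have h := key_bernoulli hα ha
    rw [le_div_iff₀ hα1]
    linarith [h]
  calc ∑ n ∈ range M, ((n : ℝ) + N + 1) ^ (-α)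
      ≤ ∑ n ∈ range M,
          ((((n : ℝ) + N) ^ (1 - α) - ((n : ℝ) + N + 1) ^ (1 - α)) / (α - 1)) :=
        Finset.sum_le_sum step
    _ = (∑ n ∈ range M,
          (((n : ℝ) + N) ^ (1 - α) - ((n : ℝ) + N + 1) ^ (1 - α))) / (α - 1) := by
        rw [Finset.sum_div]
    _ = (((0 : ℕ) + (N:ℝ)) ^ (1 - α) - (((M : ℕ) : ℝ) + N) ^ (1 - α)) / (α - 1) := by
        congr 1
        have := Finset.sum_range_sub' (f := fun n : ℕ => ((n : ℝ) + N) ^ (1 - α)) M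
        rw [← this]
        apply Finset.sum_congr rfl
        intro n _
        push_cast
        ring_nf
    _ ≤ (N : ℝ) ^ (1 - α) / (α - 1) := by
        apply div_le_div_of_nonneg_right ?_ hα1.le
        have : (0:ℝ) ≤ (((M : ℕ) : ℝ) + N) ^ (1 - α) :=
          Real.rpow_nonneg (by positivity) _
        push_cast
        rw [zero_add]
        linarith

/-- For `α > 1` and `a_j = j^{−α}`, the sum `∑_{j≥1} j^{−α}/(1 + β j^{−α})` is comparable to
`β^{−(α−1)/α}` for `β ≥ 1`. -/
theorem stmt11 (α : ℝ) (hα : 1 < α) :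
    ∃ c C : ℝ, 0 < c ∧ 0 < C ∧ ∀ β : ℝ, 1 ≤ β →
      c * β ^ (-(α - 1) / α) ≤
        (∑' j : ℕ+, (j : ℝ) ^ (-α) / (1 + β * (j : ℝ) ^ (-α))) ∧
      (∑' j : ℕ+, (j : ℝ) ^ (-α) / (1 + β * (j : ℝ) ^ (-α))) ≤
        C * β ^ (-(α - 1) / α) := by
  have hα1 : (0:ℝ) < α - 1 := by linarith
  have hα0 : (0:ℝ) < α := by linarith
  have h2α : (0:ℝ) < 2 ^ α + 1 := by positivity
  refine ⟨1 / (2 ^ α + 1), 2 + 1 / (α - 1), by positivity, by positivity, ?_⟩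
  intro β hβ
  have hβ0 : (0:ℝ) < β := lt_of_lt_of_le one_pos hβ
  set q : ℝ := -(α - 1) / α with hqdef
  set G : ℕ → ℝ := fun n => 1 / (((n : ℝ) + 1) ^ α + β) with hG
  have hGpos : ∀ n, 0 < G n := by
    intro n
    have h1 : (0:ℝ) < ((n : ℝ) + 1) ^ α := rpow_pos_of_pos (by positivity) _
    have : (0:ℝ) < ((n : ℝ) + 1) ^ α + β := by linarith
    exact one_div_pos.2 this
  have hGle : ∀ n, G n ≤ ((n : ℝ) + 1) ^ (-α) := by
    intro n
    have h1 : (0:ℝ) < ((n : ℝ) + 1) ^ α := rpow_pos_of_pos (by positivity) _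
    have h2 : ((n : ℝ) + 1) ^ α ≤ ((n : ℝ) + 1) ^ α + β := by linarith
    have := one_div_le_one_div_of_le h1 h2
    rwa [Real.rpow_neg (by positivity), ← one_div]
  have hGleβ : ∀ n, G n ≤ 1 / β := by
    intro n
    have h1 : (0:ℝ) ≤ ((n : ℝ) + 1) ^ α := Real.rpow_nonneg (by positivity) _
    exact one_div_le_one_div_of_le hβ0 (by linarith)
  have hsum : Summable G := by
    apply Summable.of_nonneg_of_le (fun n => (hGpos n).le) hGle
    have h1 : Summable (fun n : ℕ => (n : ℝ) ^ (-α)) :=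
      Real.summable_nat_rpow.2 (by linarith)
    have h2 := (summable_nat_add_iff 1).2 h1
    refine h2.congr fun n => ?_
    push_cast
    rfl
  -- rewrite the tsum over ℕ+ as a tsum over ℕ
  have hrw : (∑' j : ℕ+, (j : ℝ) ^ (-α) / (1 + β * (j : ℝ) ^ (-α))) = ∑' n : ℕ, G n := by
    have hterm : ∀ j : ℕ+, (j : ℝ) ^ (-α) / (1 + β * (j : ℝ) ^ (-α))
        = 1 / ((j : ℝ) ^ α + β) := by
      intro j
      have hj : (0:ℝ) < (j : ℝ) := by exact_mod_cast j.pos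
      have hA : (0:ℝ) < (j : ℝ) ^ α := rpow_pos_of_pos hj _
      rw [Real.rpow_neg hj.le]
      rw [div_eq_div_iff]
      · field_simp
      · have : (0:ℝ) < β * ((j:ℝ) ^ α)⁻¹ := by positivity
        linarith
      · linarith
    rw [tsum_congr hterm]
    rw [← Equiv.pnatEquivNat.symm.tsum_eq (fun j : ℕ+ => 1 / ((j : ℝ) ^ α + β))]
    apply tsum_congr
    intro n
    have : ((Equiv.pnatEquivNat.symm n : ℕ+) : ℝ) = (n : ℝ) + 1 := by
      have h : ((Equiv.pnatEquivNat.symm n : ℕ+) : ℕ) = n + 1 := rfl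
      exact_mod_cast h
    rw [this]
  rw [hrw]
  -- choose the splitting point N
  set N : ℕ := ⌈β ^ α⁻¹⌉₊ with hNdef
  have hb0 : (0:ℝ) < β ^ α⁻¹ := rpow_pos_of_pos hβ0 _
  have hb1 : (1:ℝ) ≤ β ^ α⁻¹ := by
    have := Real.rpow_le_rpow (le_of_lt one_pos) hβ (by positivity : (0:ℝ) ≤ α⁻¹)
    rwa [Real.one_rpow] at this
  have hN1 : 1 ≤ N := Nat.one_le_ceil_iff.2 hb0
  have hNge : β ^ α⁻¹ ≤ (N : ℝ) := Nat.le_ceil _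
  have hNle : (N : ℝ) ≤ 2 * β ^ α⁻¹ := by
    have h := Nat.ceil_lt_add_one hb0.le
    have h2 : (N:ℝ) < β ^ α⁻¹ + 1 := h
    linarith
  -- rpow bookkeeping
  have hαne : α ≠ 0 := ne_of_gt hα0
  have hq1 : β ^ α⁻¹ * β⁻¹ = β ^ q := by
    rw [← Real.rpow_neg_one β, ← Real.rpow_add hβ0]
    congr 1
    rw [hqdef]
    field_simp
    ring
  have hq2 : (β ^ α⁻¹) ^ (1 - α) = β ^ q := by
    rw [← Real.rpow_mul hβ0.le]
    congr 1
    rw [hqdef]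
    field_simp
    ring
  have hq3 : (β ^ α⁻¹) ^ α = β := by
    rw [← Real.rpow_mul hβ0.le, inv_mul_cancel₀ hαne, Real.rpow_one]
  have hqpos : (0:ℝ) < β ^ q := rpow_pos_of_pos hβ0 _
  constructor
  · -- lower bound
    have hterm : ∀ n ∈ range N, 1 / ((2 ^ α + 1) * β) ≤ G n := by
      intro n hn
      have hn' : (n : ℝ) + 1 ≤ (N : ℝ) := by
        have := Finset.mem_range.1 hn
        exact_mod_cast Nat.succ_le_of_lt this
      have h1 : ((n : ℝ) + 1) ^ α ≤ (2 * β ^ α⁻¹) ^ α :=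
        Real.rpow_le_rpow (by positivity) (hn'.trans hNle) hα0.le
      have h2 : (2 * β ^ α⁻¹) ^ α = 2 ^ α * β := by
        rw [Real.mul_rpow (by norm_num) hb0.le, hq3]
      have h3 : ((n : ℝ) + 1) ^ α + β ≤ (2 ^ α + 1) * β := by
        rw [h2] at h1
        nlinarith
      exact one_div_le_one_div_of_le (by positivity) h3
    have hsumlow : (N : ℝ) * (1 / ((2 ^ α + 1) * β)) ≤ ∑ n ∈ range N, G n := by
      have := Finset.card_nsmul_le_sum (range N) G (1 / ((2 ^ α + 1) * β)) hterm
      rwa [Finset.card_range, nsmul_eq_mul] at this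
    have hlow2 : 1 / (2 ^ α + 1) * β ^ q ≤ (N : ℝ) * (1 / ((2 ^ α + 1) * β)) := by
      have e : 1 / (2 ^ α + 1) * β ^ q = β ^ α⁻¹ * (1 / ((2 ^ α + 1) * β)) := by
        rw [← hq1]
        field_simp
        try ring
      rw [e]
      apply mul_le_mul_of_nonneg_right hNge
      positivity
    calc 1 / (2 ^ α + 1) * β ^ q ≤ (N : ℝ) * (1 / ((2 ^ α + 1) * β)) := hlow2
      _ ≤ ∑ n ∈ range N, G n := hsumlow
      _ ≤ ∑' n, G n := Summable.sum_le_tsum _ (fun i _ => (hGpos i).le) hsum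
  · -- upper bound
    have hsplit := Summable.sum_add_tsum_nat_add (f := G) N hsum
    have hhead : ∑ n ∈ range N, G n ≤ 2 * β ^ q := by
      have h1 : ∑ n ∈ range N, G n ≤ (N : ℝ) * (1 / β) := by
        have := Finset.sum_le_card_nsmul (range N) G (1 / β) (fun n _ => hGleβ n)
        rwa [Finset.card_range, nsmul_eq_mul] at this
      have h2 : (N : ℝ) * (1 / β) ≤ 2 * β ^ α⁻¹ * (1 / β) := by
        apply mul_le_mul_of_nonneg_right hNle
        positivity
      have h3 : 2 * β ^ α⁻¹ * (1 / β) = 2 * β ^ q := by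
        rw [← hq1]
        field_simp
      linarith
    have htail : (∑' n, G (n + N)) ≤ β ^ q / (α - 1) := by
      have h1 : (∑' n, G (n + N)) ≤ (N : ℝ) ^ (1 - α) / (α - 1) := by
        apply Real.tsum_le_of_sum_range_le (fun n => (hGpos _).le)
        intro M
        calc ∑ n ∈ range M, G (n + N)
            ≤ ∑ n ∈ range M, ((n : ℝ) + N + 1) ^ (-α) := by
              apply Finset.sum_le_sum
              intro n _
              have h := hGle (n + N)
              push_cast at h
              exact h
          _ ≤ (N : ℝ) ^ (1 - α) / (α - 1) := tail_sum_le hα hN1 M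
      have h2 : (N : ℝ) ^ (1 - α) ≤ β ^ q := by
        rw [← hq2]
        exact Real.rpow_le_rpow_of_nonpos hb0 hNge (by linarith)
      calc (∑' n, G (n + N)) ≤ (N : ℝ) ^ (1 - α) / (α - 1) := h1
        _ ≤ β ^ q / (α - 1) := by
            apply div_le_div_of_nonneg_right h2 hα1.le
    have e : (2 + 1 / (α - 1)) * β ^ q = 2 * β ^ q + β ^ q / (α - 1) := by
      field_simp
    rw [← hsplit, e]
    exact add_le_add hhead htail
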